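/- Copula factorization (Sklar-type density decomposition): if (X1, …, Xd) has a continuous joint density p with strictly increasing continuous marginal cdfs F1, …, Fd and marginal densities p1, …, pd that are strictly positive, then the function c(u1,…,ud) := p(F1^{-1}(u1), …, Fd^{-1}(ud)) / Π_j pj(Fj^{-1}(uj)) is a density on [0,1]^d with uniform marginals, and p(x1,…,xd) = c(F1(x1),…,Fd(xd)) · Π_j pj(xj). -/

import Mathlib

open MeasureTheory

open scoped ENNReal

theorem lintegral_fin_prod_eq_prod' {n : ℕ} (f : Fin n → ℝ → ℝ≥0∞) (hf : ∀ i, Measurable (f i)) :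
    ∫⁻ x : Fin n → ℝ, ∏ i, f i (x i) = ∏ i, ∫⁻ t, f i t := by
  induction n with
  | zero => simp [volume_pi]
  | succ n ih =>
    have hmp := (measurePreserving_piFinSuccAbove (fun _ : Fin (n+1) => (volume : Measure ℝ)) 0).symm
    rw [volume_pi, ← hmp.lintegral_comp_emb (MeasurableEquiv.measurableEmbedding _)]
    simp_rw [MeasurableEquiv.piFinSuccAbove_symm_apply, Fin.insertNthEquiv,
      Fin.prod_univ_succ, Fin.insertNth_zero]
    simp only [Fin.zero_succAbove, Function.comp_def, Fin.cons_zero, Fin.cons_succ,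
      Equiv.coe_fn_mk, Fin.cast_eq_self, cast_eq]
    have hg : Measurable fun y : Fin n → ℝ => ∏ x : Fin n, f x.succ (y x) :=
      Finset.measurable_prod _ fun i _ => (hf i.succ).comp (measurable_pi_apply i)
    rw [lintegral_prod_mul (hf 0).aemeasurable hg.aemeasurable, ← volume_pi,
      ih (fun i => f i.succ) (fun i => hf i.succ)]

/-- Copula factorization (Sklar-type density decomposition). If
`(X1,…,Xd)` has a continuous strictly positive joint density `p` with strictly
increasing continuous marginal cdfs `F j` and strictly positive continuous marginal
densities `pj j`, then
`c(u) := p(F₁⁻¹(u₁),…,F_d⁻¹(u_d)) / ∏ j pj j (F j⁻¹ (u j))`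
is a probability density on the unit cube with uniform marginals, and
`p(x) = c(F₁(x₁),…,F_d(x_d)) · ∏ j pj j (x j)`. -/
theorem stmt_8 {d : ℕ} {Ω : Type*} [MeasurableSpace Ω]
    (μ : Measure Ω) [IsProbabilityMeasure μ]
    (Xv : Ω → (Fin d → ℝ)) (hXv : Measurable Xv)
    (p : (Fin d → ℝ) → ℝ) (pj : Fin d → ℝ → ℝ) (F Finv : Fin d → ℝ → ℝ)
    -- joint density: continuous, strictly positive, density of the law of Xv
    (hpc : Continuous p) (hppos : ∀ x, 0 < p x)
    (hjoint : Measure.map Xv μ = volume.withDensity (fun x => ENNReal.ofReal (p x)))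
    -- marginal densities: continuous, strictly positive, densities of coordinates
    (hpjc : ∀ j, Continuous (pj j)) (hpjpos : ∀ j x, 0 < pj j x)
    (hmarg : ∀ j, Measure.map (fun ω => Xv ω j) μ =
      volume.withDensity (fun x => ENNReal.ofReal (pj j x)))
    -- cdfs and their inverses
    (hF : ∀ j x, F j x = ∫ t in Set.Iic x, pj j t)
    (hFmono : ∀ j, StrictMono (F j))
    (hFrange : ∀ j x, F j x ∈ Set.Ioo (0 : ℝ) 1)
    (hFinv : ∀ j, ∀ u ∈ Set.Ioo (0 : ℝ) 1, F j (Finv j u) = u)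
    (hinvF : ∀ j x, Finv j (F j x) = x) :
    -- the copula density
    let c : (Fin d → ℝ) → ℝ :=
      fun u => p (fun j => Finv j (u j)) / ∏ j, pj j (Finv j (u j))
    let ν : Measure (Fin d → ℝ) :=
      ((volume : Measure (Fin d → ℝ)).restrict
          (Set.univ.pi fun _ => Set.Ioo (0 : ℝ) 1)).withDensity
        (fun u => ENNReal.ofReal (c u))
    -- (a) c is a probability density on the unit cube …
    IsProbabilityMeasure ν ∧
    -- … with uniform univariate marginals
    (∀ j, Measure.map (fun u => u j) ν = volume.restrict (Set.Ioo (0 : ℝ) 1)) ∧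
    -- (b) the density factorizes through the copula
    (∀ x : Fin d → ℝ, p x = c (fun j => F j (x j)) * ∏ j, pj j (x j)) := by
  intro c ν
  set I : Set ℝ := Set.Ioo (0 : ℝ) 1 with hI
  set cube : Set (Fin d → ℝ) := Set.univ.pi fun _ => I with hcube
  have hcube_meas : MeasurableSet cube :=
    MeasurableSet.univ_pi fun _ => measurableSet_Ioo
  set T : (Fin d → ℝ) → (Fin d → ℝ) := fun x j => F j (x j) with hT
  set m : Fin d → Measure ℝ :=
    fun j => volume.withDensity fun x => ENNReal.ofReal (pj j x) with hm
  -- coordinates of Xv are measurable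
  have hXj : ∀ j, Measurable fun ω => Xv ω j :=
    fun j => (measurable_pi_apply j).comp hXv
  -- marginal densities give probability measures
  haveI hmargP : ∀ j, IsProbabilityMeasure (m j) := by
    intro j
    have h := Measure.isProbabilityMeasure_map (μ := μ) (f := fun ω => Xv ω j) (hXj j).aemeasurable
    rwa [hmarg j] at h
  haveI hmSF : ∀ j, SigmaFinite (m j) := fun j => by
    haveI := hmargP j; infer_instance
  -- the marginal densities are integrable
  have hpjint : ∀ j, Integrable (pj j) := by
    intro j
    have h1 : ∫⁻ x, ENNReal.ofReal (pj j x) = 1 := by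
      have h := (hmargP j).measure_univ
      rwa [hm, withDensity_apply _ MeasurableSet.univ, Measure.restrict_univ] at h
    refine ⟨(hpjc j).aestronglyMeasurable, ?_⟩
    rw [hasFiniteIntegral_iff_ofReal (Filter.Eventually.of_forall fun x => (hpjpos j x).le), h1]
    exact ENNReal.one_lt_top
  -- derivative of the cdfs
  have hFd : ∀ j x, HasDerivAt (F j) (pj j x) x := by
    intro j x
    have key : ∀ y, F j y = F j 0 + ∫ t in (0:ℝ)..y, pj j t := by
      intro y
      have h := intervalIntegral.integral_Iic_sub_Iic
        ((hpjint j).integrableOn (s := Set.Iic 0)) ((hpjint j).integrableOn (s := Set.Iic y))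
      rw [hF j y, hF j 0]
      linarith
    have hd : HasDerivAt (fun y => F j 0 + ∫ t in (0:ℝ)..y, pj j t) (pj j x) x := by
      have h := intervalIntegral.integral_hasDerivAt_right
        ((hpjc j).intervalIntegrable 0 x)
        ((hpjc j).stronglyMeasurable.stronglyMeasurableAtFilter)
        ((hpjc j).continuousAt)
      exact h.const_add (F j 0)
    have : F j = fun y => F j 0 + ∫ t in (0:ℝ)..y, pj j t := funext key
    rw [this]
    exact hd
  have hFcont : ∀ j, Continuous (F j) :=
    fun j => continuous_iff_continuousAt.2 fun x => (hFd j x).continuousAt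
  have hTmeas : Measurable T :=
    measurable_pi_iff.2 fun j => (hFcont j).measurable.comp (measurable_pi_apply j)
  haveI hfinI : IsFiniteMeasure (volume.restrict I) := by
    constructor
    rw [Measure.restrict_apply_univ, hI, Real.volume_Ioo]
    exact ENNReal.ofReal_lt_top
  -- probability integral transform, coordinatewise
  have hpush : ∀ j, Measure.map (F j) (m j) = volume.restrict I := by
    intro j
    haveI : IsProbabilityMeasure (Measure.map (F j) (m j)) :=
      Measure.isProbabilityMeasure_map (hFcont j).measurable.aemeasurable
    have hIic : ∀ y, m j (Set.Iic y) = ENNReal.ofReal (F j y) := by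
      intro y
      rw [hm, withDensity_apply _ measurableSet_Iic, hF j y,
        ofReal_integral_eq_lintegral_ofReal ((hpjint j).restrict)
          (Filter.Eventually.of_forall fun x => (hpjpos j x).le)]
    refine Measure.ext_of_Iic _ _ fun u => ?_
    rw [Measure.map_apply (hFcont j).measurable measurableSet_Iic,
      Measure.restrict_apply measurableSet_Iic]
    rcases le_or_gt u 0 with h0 | h0
    · have h1 : F j ⁻¹' Set.Iic u = ∅ := by
        ext x
        simp only [Set.mem_preimage, Set.mem_Iic, Set.mem_empty_iff_false, iff_false, not_le]
        exact lt_of_le_of_lt h0 (hFrange j x).1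
      have h2 : Set.Iic u ∩ I = ∅ := by
        ext x
        simp only [Set.mem_inter_iff, Set.mem_Iic, hI, Set.mem_Ioo, Set.mem_empty_iff_false,
          iff_false, not_and, and_imp]
        intro hxu hx0
        exact absurd (lt_of_lt_of_le hx0 (hxu.trans h0)) (lt_irrefl 0)
      rw [h1, h2, measure_empty, measure_empty]
    rcases lt_or_ge u 1 with h1 | h1
    · have hu : u ∈ Set.Ioo (0:ℝ) 1 := ⟨h0, h1⟩
      have hpre : F j ⁻¹' Set.Iic u = Set.Iic (Finv j u) := by
        ext x
        simp only [Set.mem_preimage, Set.mem_Iic]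
        conv_lhs => rw [← hFinv j u hu]
        exact (hFmono j).le_iff_le
      have hset : Set.Iic u ∩ I = Set.Ioc 0 u := by
        ext x
        simp only [Set.mem_inter_iff, Set.mem_Iic, hI, Set.mem_Ioo, Set.mem_Ioc]
        constructor
        · rintro ⟨hxu, hx0, _⟩; exact ⟨hx0, hxu⟩
        · rintro ⟨hx0, hxu⟩; exact ⟨hxu, hx0, lt_of_le_of_lt hxu h1⟩
      rw [hpre, hset, hIic, hFinv j u hu, Real.volume_Ioc, sub_zero]
    · have hpre : F j ⁻¹' Set.Iic u = Set.univ := by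
        ext x
        simp only [Set.mem_preimage, Set.mem_Iic, Set.mem_univ, iff_true]
        exact le_of_lt (lt_of_lt_of_le (hFrange j x).2 h1)
      have hset : Set.Iic u ∩ I = I := by
        apply Set.inter_eq_self_of_subset_right
        intro x hx
        exact le_of_lt (lt_of_lt_of_le hx.2 h1)
      rw [hpre, hset, measure_univ, hI, Real.volume_Ioo, sub_zero, ENNReal.ofReal_one]
  have hmp : ∀ j, MeasurePreserving (F j) (m j) (volume.restrict I) :=
    fun j => ⟨(hFcont j).measurable, hpush j⟩
  have hTmp : MeasurePreserving T (Measure.pi m) (Measure.pi fun _ => volume.restrict I) :=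
    measurePreserving_pi _ _ hmp
  -- product of restricted uniforms is the restriction to the cube
  have hpiI : Measure.pi (fun _ : Fin d => volume.restrict I) = volume.restrict cube := by
    refine Measure.pi_eq fun s hs => ?_
    rw [Measure.restrict_apply (MeasurableSet.univ_pi hs), hcube, ← Set.pi_inter_distrib,
      volume_pi_pi]
    exact Finset.prod_congr rfl fun j _ => (Measure.restrict_apply (hs j)).symm
  -- the product of the marginal laws as a density on ℝ^d
  have hpiD : (volume : Measure (Fin d → ℝ)).withDensity
      (fun x => ∏ j, ENNReal.ofReal (pj j (x j))) = Measure.pi m := by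
    refine (Measure.pi_eq fun s hs => ?_).symm
    rw [withDensity_apply _ (MeasurableSet.univ_pi hs), ← lintegral_indicator (MeasurableSet.univ_pi hs)]
    have hind : ∀ x : Fin d → ℝ,
        (Set.univ.pi s).indicator (fun x => ∏ j, ENNReal.ofReal (pj j (x j))) x
          = ∏ j, (s j).indicator (fun t => ENNReal.ofReal (pj j t)) (x j) := by
      intro x
      by_cases hx : x ∈ Set.univ.pi s
      · rw [Set.indicator_of_mem hx]
        refine Finset.prod_congr rfl fun j _ => ?_
        rw [Set.indicator_of_mem (hx j (Set.mem_univ j))]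
      · rw [Set.indicator_of_notMem hx]
        rw [Set.mem_univ_pi] at hx
        push_neg at hx
        obtain ⟨j, hj⟩ := hx
        exact (Finset.prod_eq_zero (Finset.mem_univ j)
          (Set.indicator_of_notMem hj _)).symm
    simp_rw [hind]
    rw [lintegral_fin_prod_eq_prod' _
      (fun j => ((hpjc j).measurable.ennreal_ofReal).indicator (hs j))]
    refine Finset.prod_congr rfl fun j _ => ?_
    rw [lintegral_indicator (hs j)]
    exact (withDensity_apply _ (hs j)).symm
  -- positivity of the product of marginal densities
  have hProdPos : ∀ x : Fin d → ℝ, 0 < ∏ j, pj j (x j) :=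
    fun x => Finset.prod_pos fun j _ => hpjpos j _
  have hcT : ∀ x : Fin d → ℝ, c (T x) = p x / ∏ j, pj j (x j) := by
    intro x
    simp only [c, hT, hinvF]
  -- part (b): factorization
  have hfact : ∀ x : Fin d → ℝ, p x = c (fun j => F j (x j)) * ∏ j, pj j (x j) := by
    intro x
    have : (fun j => F j (x j)) = T x := rfl
    rw [this, hcT, div_mul_cancel₀ _ (hProdPos x).ne']
  -- continuity of c ∘ T
  have hcTcont : Continuous fun x : Fin d → ℝ => c (T x) := by
    have : (fun x : Fin d → ℝ => c (T x)) = fun x => p x / ∏ j, pj j (x j) := funext hcT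
    rw [this]
    exact hpc.div (continuous_finset_prod _ fun j _ =>
      (hpjc j).comp (continuous_apply j)) fun x => (hProdPos x).ne'
  -- the law of Xv in terms of the copula density
  have hlaw : Measure.map Xv μ =
      (Measure.pi m).withDensity fun x => ENNReal.ofReal (c (T x)) := by
    have hfm : Measurable fun x : Fin d → ℝ => ∏ j, ENNReal.ofReal (pj j (x j)) := by
      apply Finset.measurable_prod
      intro j _
      exact ((hpjc j).comp (continuous_apply j)).measurable.ennreal_ofReal
    have hgm : Measurable fun x : Fin d → ℝ => ENNReal.ofReal (c (T x)) :=
      hcTcont.measurable.ennreal_ofReal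
    rw [hjoint, ← hpiD, ← withDensity_mul _ hfm hgm]
    congr 1
    funext x
    simp only [Pi.mul_apply]
    rw [← ENNReal.ofReal_prod_of_nonneg (fun j _ => (hpjpos j (x j)).le),
      ← ENNReal.ofReal_mul (hProdPos x).le, hcT x, mul_comm, div_mul_cancel₀ _ (hProdPos x).ne']
  -- continuity of Finv on the open interval, via order isomorphisms
  have hFinvCont : ∀ j, ContinuousOn (Finv j) I := by
    intro j
    have hsm : StrictMono fun x : ℝ => (⟨F j x, hFrange j x⟩ : I) := by
      intro a b hab
      exact Subtype.mk_lt_mk.2 (hFmono j hab)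
    have hsurj : Function.Surjective fun x : ℝ => (⟨F j x, hFrange j x⟩ : I) := by
      rintro ⟨u, hu⟩
      exact ⟨Finv j u, Subtype.ext (hFinv j u hu)⟩
    set e : ℝ ≃o I := StrictMono.orderIsoOfSurjective _ hsm hsurj with he
    have heq : ∀ u : I, Finv j (u : ℝ) = e.symm u := by
      intro u
      have h1 : e (e.symm u) = u := e.apply_symm_apply u
      have h2 : F j (e.symm u) = (u : ℝ) := congrArg Subtype.val h1
      rw [← h2, hinvF]
    rw [continuousOn_iff_continuous_restrict]
    have : I.domRestrict (Finv j) = fun u : I => e.symm u := funext fun u => heq u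
    rw [this]
    exact e.symm.continuous
  -- continuity of c on the cube
  have hccont : ContinuousOn c cube := by
    have h1 : ContinuousOn (fun u : Fin d → ℝ => fun j => Finv j (u j)) cube := by
      rw [continuousOn_pi]
      intro j
      exact (hFinvCont j).comp (continuous_apply j).continuousOn
        fun u hu => hu j (Set.mem_univ j)
    have h2 : ContinuousOn (fun u : Fin d → ℝ => p (fun j => Finv j (u j))) cube :=
      hpc.comp_continuousOn h1
    have h3 : ContinuousOn (fun u : Fin d → ℝ => ∏ j, pj j (Finv j (u j))) cube := by
      apply continuousOn_finset_prod
      intro j _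
      exact (hpjc j).comp_continuousOn ((hFinvCont j).comp
        (continuous_apply j).continuousOn fun u hu => hu j (Set.mem_univ j))
    exact h2.div h3 fun u _ => (Finset.prod_pos fun j _ => hpjpos j _).ne'
  have hcAE : AEMeasurable (fun u => ENNReal.ofReal (c u)) (volume.restrict cube) :=
    ENNReal.measurable_ofReal.comp_aemeasurable (hccont.aemeasurable hcube_meas)
  -- push forward along T
  have hmapT : Measure.map T (Measure.pi m) = volume.restrict cube := by
    rw [hTmp.map_eq, hpiI]
  have hmapwd : Measure.map T
      ((Measure.pi m).withDensity fun x => ENNReal.ofReal (c (T x))) = ν := by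
    have hνdef : ν = (volume.restrict cube).withDensity fun u => ENNReal.ofReal (c u) := rfl
    rw [hνdef]
    ext A hA
    rw [Measure.map_apply hTmeas hA, withDensity_apply _ (hTmeas hA), withDensity_apply _ hA]
    have hae : AEMeasurable (fun u => ENNReal.ofReal (c u))
        (Measure.map T ((Measure.pi m).restrict (T ⁻¹' A))) := by
      rw [← Measure.restrict_map hTmeas hA, hmapT]
      exact hcAE.mono_measure Measure.restrict_le_self
    calc ∫⁻ x in T ⁻¹' A, ENNReal.ofReal (c (T x)) ∂(Measure.pi m)
        = ∫⁻ u, ENNReal.ofReal (c u) ∂(Measure.map T ((Measure.pi m).restrict (T ⁻¹' A))) :=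
          (lintegral_map' hae hTmeas.aemeasurable).symm
      _ = ∫⁻ u in A, ENNReal.ofReal (c u) ∂(Measure.map T (Measure.pi m)) := by
          rw [Measure.restrict_map hTmeas hA]
      _ = ∫⁻ u in A, ENNReal.ofReal (c u) ∂(volume.restrict cube) := by rw [hmapT]
  -- ν is the law of the transformed random vector
  have hν : ν = Measure.map (T ∘ Xv) μ := by
    rw [← Measure.map_map hTmeas hXv, hlaw, hmapwd]
  refine ⟨?_, ?_, hfact⟩
  · rw [hν]
    exact Measure.isProbabilityMeasure_map (hTmeas.comp hXv).aemeasurable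
  · intro j
    rw [hν, Measure.map_map (measurable_pi_apply j) (hTmeas.comp hXv)]
    have hcomp : ((fun u : Fin d → ℝ => u j) ∘ (T ∘ Xv))
        = (F j) ∘ fun ω => Xv ω j := rfl
    rw [hcomp, ← Measure.map_map (hFcont j).measurable (hXj j), hmarg j]
    exact hpush j
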